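/- (Corollary 2.2 for H_g.) Let ν ≥ 2, L > 0, g > 0, and let γ : ℝ → ℝ^ν be a C², L-periodic curve parametrized by arc length (‖γ'(s)‖ = 1 for all s). Set V(s) := g·‖γ''(s)‖². Suppose u_1 : ℝ → ℝ is C², L-periodic, satisfies −u_1''(s) + V(s) u_1(s) = λ_1 u_1(s) for all s and ∫_0^L u_1(s)² ds = 1, and suppose λ_2 ∈ ℝ is such that every C², L-periodic φ : ℝ → ℝ with ∫_0^L φ(s) u_1(s) ds = 0 satisfies ∫_0^L (φ'(s)² + V(s) φ(s)²) ds ≥ λ_2 ∫_0^L φ(s)² ds. Then λ_2 − λ_1 ≤ max(4, 1/g)·λ_1. -/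

import Mathlib

open MeasureTheory intervalIntegral

/-- Corollary 2.2 for `H_g = −d²/ds² + g κ²` on a closed `C²` arc-length-parametrized
curve: with ground state `u₁` of eigenvalue `λ₁` and `λ₂` characterized variationally
on the orthogonal complement of `u₁`, the gap satisfies
`λ₂ − λ₁ ≤ max(4, 1/g)·λ₁`. -/
theorem gap_bound_Hg_closed_curve {ν : ℕ} (hν : 2 ≤ ν) (L : ℝ) (hL : 0 < L)
    (g : ℝ) (hg : 0 < g)
    (γ : ℝ → EuclideanSpace ℝ (Fin ν)) (hγ : ContDiff ℝ 2 γ)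
    (hγper : ∀ s : ℝ, γ (s + L) = γ s) (harc : ∀ s : ℝ, ‖deriv γ s‖ = 1)
    (V : ℝ → ℝ) (hVdef : ∀ s : ℝ, V s = g * ‖deriv (deriv γ) s‖ ^ 2)
    (u1 : ℝ → ℝ) (lam1 lam2 : ℝ)
    (hu1 : ContDiff ℝ 2 u1) (hu1per : ∀ s : ℝ, u1 (s + L) = u1 s)
    (heig : ∀ s : ℝ, -deriv (deriv u1) s + V s * u1 s = lam1 * u1 s)
    (hnorm : ∫ s in (0:ℝ)..L, (u1 s) ^ 2 = 1)
    (hlam2 : ∀ φ : ℝ → ℝ, ContDiff ℝ 2 φ → (∀ s : ℝ, φ (s + L) = φ s) →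
      (∫ s in (0:ℝ)..L, φ s * u1 s) = 0 →
      lam2 * ∫ s in (0:ℝ)..L, (φ s) ^ 2 ≤
        ∫ s in (0:ℝ)..L, ((deriv φ s) ^ 2 + V s * (φ s) ^ 2)) :
    lam2 - lam1 ≤ max 4 (1 / g) * lam1 := by
  classical
  -- ## Smoothness unpacking
  have h21 : (2 : WithTop ℕ∞) = 1 + 1 := rfl
  have hγ1 : ContDiff ℝ 1 (deriv γ) := by
    have h := hγ; rw [h21, contDiff_succ_iff_deriv] at h; exact h.2.2
  have hγd : Differentiable ℝ γ := hγ.differentiable (by norm_num)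
  have hγ'd : Differentiable ℝ (deriv γ) := hγ1.differentiable (by norm_num)
  have hγ'c : Continuous (deriv γ) := hγ'd.continuous
  have hγ''c : Continuous (deriv (deriv γ)) := (contDiff_one_iff_deriv.mp hγ1).2
  have hu1' : ContDiff ℝ 1 (deriv u1) := by
    have h := hu1; rw [h21, contDiff_succ_iff_deriv] at h; exact h.2.2
  have hud : Differentiable ℝ u1 := hu1.differentiable (by norm_num)
  have hu'd : Differentiable ℝ (deriv u1) := hu1'.differentiable (by norm_num)
  have huc : Continuous u1 := hud.continuous
  have hu'c : Continuous (deriv u1) := hu'd.continuous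
  have hu''c : Continuous (deriv (deriv u1)) := (contDiff_one_iff_deriv.mp hu1').2
  have hVc : Continuous V := by
    have hV : V = fun s => g * ‖deriv (deriv γ) s‖ ^ 2 := funext hVdef
    rw [hV]; exact continuous_const.mul ((hγ''c.norm).pow 2)
  have hV0 : ∀ s, 0 ≤ V s := fun s => by rw [hVdef s]; positivity
  -- components
  have hcγc : ∀ j : Fin ν, Continuous (fun s => γ s j) := fun j =>
    (EuclideanSpace.proj j).continuous.comp hγd.continuous
  have hd1c : ∀ j : Fin ν, Continuous (fun s => deriv γ s j) := fun j =>
    (EuclideanSpace.proj j).continuous.comp hγ'c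
  have hd2c : ∀ j : Fin ν, Continuous (fun s => deriv (deriv γ) s j) := fun j =>
    (EuclideanSpace.proj j).continuous.comp hγ''c
  have huD : ∀ s, HasDerivAt u1 (deriv u1 s) s := fun s => (hud s).hasDerivAt
  have hu'D : ∀ s, HasDerivAt (deriv u1) (deriv (deriv u1) s) s := fun s => (hu'd s).hasDerivAt
  have hd1D : ∀ (j : Fin ν) s, HasDerivAt (fun t => γ t j) (deriv γ s j) s := fun j s => by
    exact (EuclideanSpace.proj j).hasFDerivAt.comp_hasDerivAt s (hγd s).hasDerivAt
  have hd2D : ∀ (j : Fin ν) s, HasDerivAt (fun t => deriv γ t j) (deriv (deriv γ) s j) s :=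
    fun j s => by
      exact (EuclideanSpace.proj j).hasFDerivAt.comp_hasDerivAt s (hγ'd s).hasDerivAt
  -- derivative value transfer
  have hder_eq : ∀ {f : ℝ → ℝ} {d d' : ℝ} {s : ℝ}, HasDerivAt f d s → d = d' → HasDerivAt f d' s :=
    fun h he => he ▸ h
  -- ## Periodicity of derivatives
  have hu'per : ∀ s, deriv u1 (s + L) = deriv u1 s := by
    intro s
    rw [← deriv_comp_add_const u1 L s]
    congr 1
    exact funext hu1per
  have hγ'per : ∀ s, deriv γ (s + L) = deriv γ s := by
    intro s
    rw [← deriv_comp_add_const γ L s]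
    congr 1
    exact funext hγper
  -- periodicity at the endpoints
  have hpt : ∀ {f : ℝ → ℝ}, (∀ s, f (s + L) = f s) → f L = f 0 := by
    intro f hf
    have := hf 0
    rwa [zero_add] at this
  -- ## Norm-square as a component sum
  have hnsq : ∀ x : EuclideanSpace ℝ (Fin ν), ‖x‖ ^ 2 = ∑ j, (x j) ^ 2 := by
    intro x
    rw [EuclideanSpace.norm_eq, Real.sq_sqrt (by positivity)]
    exact Finset.sum_congr rfl fun j _ => by rw [Real.norm_eq_abs, sq_abs]
  have harcsum : ∀ s, ∑ j, (deriv γ s j) ^ 2 = 1 := by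
    intro s
    rw [← hnsq, harc s, one_pow]
  have hd2sum : ∀ s, ∑ j, (deriv (deriv γ) s j) ^ 2 = V s / g := by
    intro s
    rw [← hnsq, hVdef s]
    field_simp
  -- ## Orthogonality of tangent and second derivative, componentwise
  have horth : ∀ s, ∑ j, deriv γ s j * deriv (deriv γ) s j = 0 := by
    intro s
    have hD : HasDerivAt (fun t => ∑ j : Fin ν, (deriv γ t j) ^ 2)
        (∑ j : Fin ν, (2 : ℕ) * deriv γ s j ^ (2 - 1) * deriv (deriv γ) s j) s :=
      HasDerivAt.fun_sum fun j _ => (hd2D j s).fun_pow 2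
    have hC : HasDerivAt (fun t => ∑ j : Fin ν, (deriv γ t j) ^ 2) 0 s := by
      have he : (fun t => ∑ j : Fin ν, (deriv γ t j) ^ 2) = fun _ => (1 : ℝ) :=
        funext fun t => harcsum t
      rw [he]; exact hasDerivAt_const s 1
    have huniq := hD.unique hC
    have h2 : (2 : ℝ) * ∑ j, deriv γ s j * deriv (deriv γ) s j = 0 := by
      rw [Finset.mul_sum, ← huniq]
      exact Finset.sum_congr rfl fun j _ => by push_cast; ring
    linarith
  -- ## Integral of a derivative of a periodic function vanishes
  have hzero : ∀ (F F' : ℝ → ℝ), (∀ s, HasDerivAt F (F' s) s) → Continuous F' →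
      (∀ s, F (s + L) = F s) → (∫ s in (0:ℝ)..L, F' s) = 0 := by
    intro F F' hF hc hper
    rw [intervalIntegral.integral_eq_sub_of_hasDerivAt (fun x _ => hF x)
      (hc.intervalIntegrable 0 L), hpt hper, sub_self]
  -- ## The eigenvalue identity : ∫ (u'² + V u²) = lam1 ; pieces A, B
  set A : ℝ := ∫ s in (0:ℝ)..L, V s * u1 s ^ 2 with hAdef
  set B : ℝ := ∫ s in (0:ℝ)..L, (deriv u1 s) ^ 2 with hBdef
  have hA0 : 0 ≤ A := intervalIntegral.integral_nonneg hL.le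
    (fun s _ => mul_nonneg (hV0 s) (sq_nonneg _))
  have hB0 : 0 ≤ B := intervalIntegral.integral_nonneg hL.le (fun s _ => sq_nonneg _)
  have hBA : B + A = lam1 := by
    have hptw : ∀ s, (deriv u1 s) ^ 2 + V s * u1 s ^ 2
        = lam1 * u1 s ^ 2 + (deriv (deriv u1) s * u1 s + deriv u1 s * deriv u1 s) := fun s => by
      linear_combination (u1 s) * heig s
    have hInt : (∫ s in (0:ℝ)..L, ((deriv u1 s) ^ 2 + V s * u1 s ^ 2)) = lam1 := by
      rw [intervalIntegral.integral_congr (fun s _ => hptw s),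
        intervalIntegral.integral_add
          ((by fun_prop : Continuous (fun s => lam1 * u1 s ^ 2)).intervalIntegrable 0 L)
          ((by fun_prop : Continuous
            (fun s => deriv (deriv u1) s * u1 s + deriv u1 s * deriv u1 s)).intervalIntegrable 0 L),
        intervalIntegral.integral_const_mul, hnorm,
        hzero (fun s => deriv u1 s * u1 s)
          (fun s => deriv (deriv u1) s * u1 s + deriv u1 s * deriv u1 s)
          (fun s => (hu'D s).mul (huD s)) (by fun_prop)
          (fun s => by simp only [hu'per, hu1per])]
      ring
    rw [hBdef, hAdef, ← intervalIntegral.integral_add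
      ((by fun_prop : Continuous (fun s => (deriv u1 s) ^ 2)).intervalIntegrable 0 L)
      ((by fun_prop : Continuous (fun s => V s * u1 s ^ 2)).intervalIntegrable 0 L)]
    exact hInt
  have hlam10 : 0 ≤ lam1 := by linarith
  -- ## Trial functions φ j = (γ_j − a j) u1
  set a : Fin ν → ℝ := fun j => ∫ s in (0:ℝ)..L, γ s j * u1 s ^ 2 with hadef
  -- derivative of φ j
  have hφD : ∀ (j : Fin ν) s, HasDerivAt (fun t => (γ t j - a j) * u1 t)
      (deriv γ s j * u1 s + (γ s j - a j) * deriv u1 s) s := fun j s =>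
    ((hd1D j s).sub_const (a j)).mul (huD s)
  have hφ' : ∀ (j : Fin ν), deriv (fun t => (γ t j - a j) * u1 t)
      = fun s => deriv γ s j * u1 s + (γ s j - a j) * deriv u1 s := fun j =>
    funext fun s => (hφD j s).deriv
  have hwc : ∀ j : Fin ν, Continuous (fun s => γ s j - a j) := fun j =>
    (hcγc j).sub continuous_const
  -- orthogonality to the ground state
  have hφorth : ∀ j : Fin ν, (∫ s in (0:ℝ)..L, ((γ s j - a j) * u1 s) * u1 s) = 0 := by
    intro j
    have h1 : ∀ s, ((γ s j - a j) * u1 s) * u1 s = γ s j * u1 s ^ 2 - a j * u1 s ^ 2 :=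
      fun s => by ring
    rw [intervalIntegral.integral_congr (fun s _ => h1 s),
      intervalIntegral.integral_sub
        ((by have h := hcγc j; fun_prop : Continuous
          (fun s => γ s j * u1 s ^ 2)).intervalIntegrable 0 L)
        ((by have h := hcγc j; fun_prop : Continuous
          (fun s => a j * u1 s ^ 2)).intervalIntegrable 0 L),
      intervalIntegral.integral_const_mul, hnorm, hadef]
    simp
  -- ## Ground-state substitution identity for each trial function
  have key2 : ∀ j : Fin ν,
      (∫ s in (0:ℝ)..L, ((deriv (fun t => (γ t j - a j) * u1 t) s) ^ 2
          + V s * ((γ s j - a j) * u1 s) ^ 2))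
      = lam1 * (∫ s in (0:ℝ)..L, ((γ s j - a j) * u1 s) ^ 2)
        + ∫ s in (0:ℝ)..L, (deriv γ s j) ^ 2 * u1 s ^ 2 := by
    intro j
    have hcj := hcγc j
    have hcd1 := hd1c j
    -- the exact-derivative correction term
    have hF1D : ∀ s, HasDerivAt (fun t => (γ t j - a j) ^ 2 * (deriv u1 t * u1 t))
        (2 * (γ s j - a j) * deriv γ s j * (deriv u1 s * u1 s)
          + (γ s j - a j) ^ 2 * (deriv (deriv u1) s * u1 s + deriv u1 s * deriv u1 s)) s := by
      intro s
      exact hder_eq ((((hd1D j s).sub_const (a j)).fun_pow 2).mul ((hu'D s).mul (huD s)))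
        (by push_cast; ring)
    have hptw : ∀ s,
        (deriv (fun t => (γ t j - a j) * u1 t) s) ^ 2 + V s * ((γ s j - a j) * u1 s) ^ 2
        = (lam1 * ((γ s j - a j) * u1 s) ^ 2 + (deriv γ s j) ^ 2 * u1 s ^ 2)
          + (2 * (γ s j - a j) * deriv γ s j * (deriv u1 s * u1 s)
            + (γ s j - a j) ^ 2 * (deriv (deriv u1) s * u1 s + deriv u1 s * deriv u1 s)) := by
      intro s
      rw [hφ' j]
      linear_combination ((γ s j - a j) ^ 2 * u1 s) * heig s
    rw [intervalIntegral.integral_congr (fun s _ => hptw s),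
      intervalIntegral.integral_add
        ((by fun_prop : Continuous (fun s => lam1 * ((γ s j - a j) * u1 s) ^ 2
          + (deriv γ s j) ^ 2 * u1 s ^ 2)).intervalIntegrable 0 L)
        ((by fun_prop : Continuous (fun s => 2 * (γ s j - a j) * deriv γ s j * (deriv u1 s * u1 s)
          + (γ s j - a j) ^ 2 * (deriv (deriv u1) s * u1 s
            + deriv u1 s * deriv u1 s))).intervalIntegrable 0 L),
      hzero _ _ hF1D (by fun_prop)
        (fun s => by simp only [hγper, hu1per, hu'per]),
      intervalIntegral.integral_add
        ((by fun_prop : Continuous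
          (fun s => lam1 * ((γ s j - a j) * u1 s) ^ 2)).intervalIntegrable 0 L)
        ((by fun_prop : Continuous
          (fun s => (deriv γ s j) ^ 2 * u1 s ^ 2)).intervalIntegrable 0 L),
      intervalIntegral.integral_const_mul]
    ring
  -- ## Variational inequality summed over components
  set X : ℝ := ∑ j : Fin ν, ∫ s in (0:ℝ)..L, ((γ s j - a j) * u1 s) ^ 2 with hXdef
  have hX0 : 0 ≤ X := Finset.sum_nonneg fun j _ =>
    intervalIntegral.integral_nonneg hL.le (fun s _ => sq_nonneg _)
  have hS1 : ∑ j : Fin ν, (∫ s in (0:ℝ)..L, (deriv γ s j) ^ 2 * u1 s ^ 2) = 1 := by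
    rw [← intervalIntegral.integral_finset_sum
      (fun j _ => (by have h := hd1c j; fun_prop : Continuous
        (fun s => (deriv γ s j) ^ 2 * u1 s ^ 2)).intervalIntegrable 0 L)]
    have hptw : ∀ s, ∑ j : Fin ν, (deriv γ s j) ^ 2 * u1 s ^ 2 = u1 s ^ 2 := by
      intro s
      rw [← Finset.sum_mul, harcsum s, one_mul]
    rw [intervalIntegral.integral_congr (fun s _ => hptw s), hnorm]
  have hgap : (lam2 - lam1) * X ≤ 1 := by
    have hvar : ∀ j : Fin ν,
        lam2 * (∫ s in (0:ℝ)..L, ((γ s j - a j) * u1 s) ^ 2)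
          ≤ lam1 * (∫ s in (0:ℝ)..L, ((γ s j - a j) * u1 s) ^ 2)
            + ∫ s in (0:ℝ)..L, (deriv γ s j) ^ 2 * u1 s ^ 2 := by
      intro j
      have hsm : ContDiff ℝ 2 (fun t => (γ t j - a j) * u1 t) := by
        exact (((EuclideanSpace.proj j).contDiff.comp hγ).sub contDiff_const).mul hu1
      have hper : ∀ s, (γ (s + L) j - a j) * u1 (s + L) = (γ s j - a j) * u1 s := by
        intro s; rw [hγper, hu1per]
      exact (hlam2 _ hsm hper (hφorth j)).trans_eq (key2 j)
    have hsum := Finset.sum_le_sum (fun j (_ : j ∈ Finset.univ) => hvar j)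
    rw [← Finset.mul_sum] at hsum
    rw [Finset.sum_add_distrib, ← Finset.mul_sum, hS1] at hsum
    rw [sub_mul]
    rw [hXdef]
    linarith
  -- ## Cauchy–Schwarz via the discriminant trick
  set C : ℝ := 1 / g * A + 4 * B with hCdef
  have hC0 : 0 ≤ C := by positivity
  have hQ : ∀ t : ℝ, 0 ≤ X - 2 * t + t ^ 2 * C := by
    intro t
    -- the integrated exact-derivative term
    have hF2D : ∀ s, HasDerivAt (fun u => ∑ j : Fin ν, (γ u j - a j) * deriv γ u j * u1 u ^ 2)
        (∑ j : Fin ν, ((deriv γ s j * deriv γ s j + (γ s j - a j) * deriv (deriv γ) s j) * u1 s ^ 2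
          + (γ s j - a j) * deriv γ s j * (2 * u1 s * deriv u1 s))) s := by
      intro s
      refine HasDerivAt.fun_sum fun j _ => ?_
      exact hder_eq ((((hd1D j s).sub_const (a j)).fun_mul (hd2D j s)).mul ((huD s).fun_pow 2))
        (by push_cast; ring)
    have hF2sum : (∫ s in (0:ℝ)..L,
        ∑ j : Fin ν, ((deriv γ s j * deriv γ s j + (γ s j - a j) * deriv (deriv γ) s j) * u1 s ^ 2
          + (γ s j - a j) * deriv γ s j * (2 * u1 s * deriv u1 s))) = 0 := by
      refine hzero _ _ hF2D ?_ ?_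
      · exact continuous_finset_sum _ fun j _ => by
          have h1 := hcγc j; have h2 := hd1c j; have h3 := hd2c j
          fun_prop
      · intro s
        refine Finset.sum_congr rfl fun j _ => ?_
        simp only [hγper, hγ'per, hu1per]
    -- pointwise expansion of the square
    have hptw : ∀ s, ∑ j : Fin ν, ((γ s j - a j) * u1 s
            + t * (deriv (deriv γ) s j * u1 s + 2 * deriv γ s j * deriv u1 s)) ^ 2
        = (∑ j : Fin ν, ((γ s j - a j) * u1 s) ^ 2) - 2 * t * u1 s ^ 2
          + t ^ 2 * (V s / g * u1 s ^ 2 + 4 * (deriv u1 s) ^ 2)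
          + 2 * t * (∑ j : Fin ν,
            ((deriv γ s j * deriv γ s j + (γ s j - a j) * deriv (deriv γ) s j) * u1 s ^ 2
              + (γ s j - a j) * deriv γ s j * (2 * u1 s * deriv u1 s))) := by
      intro s
      have e1 : ∀ j : Fin ν, ((γ s j - a j) * u1 s
            + t * (deriv (deriv γ) s j * u1 s + 2 * deriv γ s j * deriv u1 s)) ^ 2
          = ((γ s j - a j) * u1 s) ^ 2
            + (t ^ 2 * u1 s ^ 2) * (deriv (deriv γ) s j) ^ 2
            + (4 * t ^ 2 * (deriv u1 s) ^ 2 - 2 * t * u1 s ^ 2) * (deriv γ s j) ^ 2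
            + (4 * t ^ 2 * u1 s * deriv u1 s) * (deriv γ s j * deriv (deriv γ) s j)
            + (2 * t) * ((deriv γ s j * deriv γ s j + (γ s j - a j) * deriv (deriv γ) s j)
                * u1 s ^ 2 + (γ s j - a j) * deriv γ s j * (2 * u1 s * deriv u1 s)) := by
        intro j; ring
      rw [Finset.sum_congr rfl fun j _ => e1 j]
      simp only [Finset.sum_add_distrib, ← Finset.mul_sum]
      rw [harcsum s, hd2sum s, horth s]
      ring
    have hint : (∫ s in (0:ℝ)..L, ∑ j : Fin ν, ((γ s j - a j) * u1 s
          + t * (deriv (deriv γ) s j * u1 s + 2 * deriv γ s j * deriv u1 s)) ^ 2)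
        = X - 2 * t + t ^ 2 * C := by
      have ca : Continuous (fun s => ∑ j : Fin ν, ((γ s j - a j) * u1 s) ^ 2) :=
        continuous_finset_sum _ fun j _ => by have h := hcγc j; fun_prop
      have cb : Continuous (fun s => 2 * t * u1 s ^ 2) := by fun_prop
      have cc : Continuous (fun s => t ^ 2 * (V s / g * u1 s ^ 2 + 4 * (deriv u1 s) ^ 2)) := by
        fun_prop
      have cd : Continuous (fun s => 2 * t * (∑ j : Fin ν,
          ((deriv γ s j * deriv γ s j + (γ s j - a j) * deriv (deriv γ) s j) * u1 s ^ 2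
            + (γ s j - a j) * deriv γ s j * (2 * u1 s * deriv u1 s)))) := by
        refine continuous_const.mul (continuous_finset_sum _ fun j _ => ?_)
        have h1 := hcγc j; have h2 := hd1c j; have h3 := hd2c j
        fun_prop
      rw [intervalIntegral.integral_congr (fun s _ => hptw s),
        intervalIntegral.integral_add ((ca.fun_sub cb).fun_add cc |>.intervalIntegrable 0 L)
          (cd.intervalIntegrable 0 L),
        intervalIntegral.integral_add ((ca.fun_sub cb).intervalIntegrable 0 L)
          (cc.intervalIntegrable 0 L),
        intervalIntegral.integral_sub (ca.intervalIntegrable 0 L) (cb.intervalIntegrable 0 L),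
        intervalIntegral.integral_finset_sum
          (fun j _ => (by have h := hcγc j; fun_prop : Continuous
            (fun s => ((γ s j - a j) * u1 s) ^ 2)).intervalIntegrable 0 L),
        intervalIntegral.integral_const_mul, hnorm,
        intervalIntegral.integral_const_mul,
        intervalIntegral.integral_add
          ((by fun_prop : Continuous (fun s => V s / g * u1 s ^ 2)).intervalIntegrable 0 L)
          ((by fun_prop : Continuous (fun s => 4 * (deriv u1 s) ^ 2)).intervalIntegrable 0 L),
        intervalIntegral.integral_congr
          (fun s _ => (by ring : V s / g * u1 s ^ 2 = 1 / g * (V s * u1 s ^ 2))),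
        intervalIntegral.integral_const_mul, intervalIntegral.integral_const_mul,
        intervalIntegral.integral_const_mul, hF2sum, ← hAdef, ← hBdef, ← hXdef, hCdef]
      ring
    rw [← hint]
    exact intervalIntegral.integral_nonneg hL.le fun s _ =>
      Finset.sum_nonneg fun j _ => sq_nonneg _
  have hXC : 1 ≤ X * C := by
    rcases eq_or_lt_of_le hC0 with hCz | hCp
    · exfalso
      have := hQ ((X + 1) / 2)
      rw [← hCz] at this
      nlinarith
    · have := hQ (1 / C)
      have h1 : 0 ≤ X - 1 / C := by
        have hexp : X - 2 * (1 / C) + (1 / C) ^ 2 * C = X - 1 / C := by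
          field_simp; ring
        rwa [hexp] at this
      have h2 : 1 / C ≤ X := by linarith
      exact (div_le_iff₀ hCp).mp h2
  -- ## Conclusion
  have hCle : C ≤ max 4 (1 / g) * lam1 := by
    have h1 : 1 / g ≤ max 4 (1 / g) := le_max_right _ _
    have h2 : (4 : ℝ) ≤ max 4 (1 / g) := le_max_left _ _
    have : C = 1 / g * A + 4 * B := hCdef
    nlinarith [mul_le_mul_of_nonneg_right h1 hA0, mul_le_mul_of_nonneg_right h2 hB0]
  have hM0 : 0 ≤ max 4 (1 / g) * lam1 := by
    have : (0:ℝ) ≤ max 4 (1 / g) := le_trans (by norm_num) (le_max_left _ _)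
    positivity
  rcases le_or_gt (lam2 - lam1) 0 with hneg | hpos
  · linarith
  · have h3 : 1 ≤ X * (max 4 (1 / g) * lam1) :=
      hXC.trans (mul_le_mul_of_nonneg_left hCle hX0)
    calc lam2 - lam1 = (lam2 - lam1) * 1 := (mul_one _).symm
      _ ≤ (lam2 - lam1) * (X * (max 4 (1 / g) * lam1)) :=
          mul_le_mul_of_nonneg_left h3 hpos.le
      _ = ((lam2 - lam1) * X) * (max 4 (1 / g) * lam1) := by ring
      _ ≤ 1 * (max 4 (1 / g) * lam1) := mul_le_mul_of_nonneg_right hgap hM0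
      _ = max 4 (1 / g) * lam1 := one_mul _
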